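/- arXiv:2010.08536 — 2 statements merged into one kernel-verified Lean document; each statement's English description precedes it below -/
import Mathlib

section
/- Let T_t, T_x, T_y, T_u, X_t, X_x, X_y, X_u, Y_t, Y_x, Y_y, Y_u, U_t, U_x, U_y, U_u be real numbers forming the 4×4 matrix M with rows (T_t,T_x,T_y,T_u), (X_t,X_x,X_y,X_u), (Y_t,Y_x,Y_y,Y_u), (U_t,U_x,U_y,U_u), and suppose det M ≠ 0. If for each μ ∈ {x,y} one has T_μ·T_u = 0, T_μ·X_u − T_u·X_μ = 0, T_μ·Y_u − T_u·Y_μ = 0, and T_μ·U_u − T_u·U_μ = 0, then T_x = T_y = T_u = 0. -/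
/-- If the 4×4 Jacobian matrix of (T,X,Y,U) is nondegenerate and for each
μ ∈ {x,y} one has T_μ T_u = 0, T_μ X_u − T_u X_μ = 0, T_μ Y_u − T_u Y_μ = 0 and
T_μ U_u − T_u U_μ = 0, then T_x = T_y = T_u = 0. -/
theorem stmt_0 (Tt Tx Ty Tu Xt Xx Xy Xu Yt Yx Yy Yu Ut Ux Uy Uu : ℝ)
    (hdet : Matrix.det
      !![Tt, Tx, Ty, Tu; Xt, Xx, Xy, Xu; Yt, Yx, Yy, Yu; Ut, Ux, Uy, Uu] ≠ 0)
    (h1x : Tx * Tu = 0) (h2x : Tx * Xu - Tu * Xx = 0)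
    (h3x : Tx * Yu - Tu * Yx = 0) (h4x : Tx * Uu - Tu * Ux = 0)
    (h1y : Ty * Tu = 0) (h2y : Ty * Xu - Tu * Xy = 0)
    (h3y : Ty * Yu - Tu * Yy = 0) (h4y : Ty * Uu - Tu * Uy = 0) :
    Tx = 0 ∧ Ty = 0 ∧ Tu = 0 := by
  by_cases hTu : Tu = 0
  · subst hTu
    simp only [mul_zero, zero_mul, sub_zero] at h2x h3x h4x h2y h3y h4y
    by_cases hTx : Tx = 0
    · by_cases hTy : Ty = 0
      · exact ⟨hTx, hTy, rfl⟩
      · exfalso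
        have hXu : Xu = 0 := by rcases mul_eq_zero.mp h2y with h | h; exact absurd h hTy; exact h
        have hYu : Yu = 0 := by rcases mul_eq_zero.mp h3y with h | h; exact absurd h hTy; exact h
        have hUu : Uu = 0 := by rcases mul_eq_zero.mp h4y with h | h; exact absurd h hTy; exact h
        apply hdet
        apply Matrix.det_eq_zero_of_column_eq_zero 3
        intro i
        fin_cases i <;> simp [Matrix.vecHead, Matrix.vecTail, Function.comp, hTx, hXu, hYu, hUu]
    · exfalso
      have hXu : Xu = 0 := by rcases mul_eq_zero.mp h2x with h | h; exact absurd h hTx; exact h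
      have hYu : Yu = 0 := by rcases mul_eq_zero.mp h3x with h | h; exact absurd h hTx; exact h
      have hUu : Uu = 0 := by rcases mul_eq_zero.mp h4x with h | h; exact absurd h hTx; exact h
      apply hdet
      apply Matrix.det_eq_zero_of_column_eq_zero 3
      intro i
      fin_cases i <;> simp [Matrix.vecHead, Matrix.vecTail, Function.comp, hXu, hYu, hUu]
  · exfalso
    have hTx : Tx = 0 := by rcases mul_eq_zero.mp h1x with h | h; exact h; exact absurd h hTu
    have hTy : Ty = 0 := by rcases mul_eq_zero.mp h1y with h | h; exact h; exact absurd h hTu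
    subst hTx hTy
    simp only [zero_mul, zero_sub, neg_eq_zero] at h2x h3x h4x h2y h3y h4y
    have hXx : Xx = 0 := by rcases mul_eq_zero.mp h2x with h | h; exact absurd h hTu; exact h
    have hYx : Yx = 0 := by rcases mul_eq_zero.mp h3x with h | h; exact absurd h hTu; exact h
    have hUx : Ux = 0 := by rcases mul_eq_zero.mp h4x with h | h; exact absurd h hTu; exact h
    apply hdet
    apply Matrix.det_eq_zero_of_column_eq_zero 1
    intro i
    fin_cases i <;> simp [Matrix.vecHead, Matrix.vecTail, Function.comp, hXx, hYx, hUx]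
end

section
/- Let F, G, H, K : ℝ³ → ℝ be functions of (x, y, q) and let u : ℝ³ → ℝ be a C² function of (t,x,y) satisfying, at every point, u_t = F(x,y,u_y)·u_xx + G(x,y,u_y)·u_yy + H(x,y,u_y)·u_xy + K(x,y,u_y). Then for every s ∈ ℝ and all constants a, b ∈ ℝ, the function v(t,x,y) := u(t+s,x,y) + a + b·x satisfies the same equation at every point. -/
/-- Partial derivative in `t` of a function `u(t,x,y)` on ℝ³. -/
noncomputable def pdT (u : ℝ × ℝ × ℝ → ℝ) (p : ℝ × ℝ × ℝ) : ℝ :=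
  deriv (fun s : ℝ => u (s, p.2.1, p.2.2)) p.1

/-- Partial derivative in `x` of a function `u(t,x,y)` on ℝ³. -/
noncomputable def pdX (u : ℝ × ℝ × ℝ → ℝ) (p : ℝ × ℝ × ℝ) : ℝ :=
  deriv (fun s : ℝ => u (p.1, s, p.2.2)) p.2.1

/-- Partial derivative in `y` of a function `u(t,x,y)` on ℝ³. -/
noncomputable def pdY (u : ℝ × ℝ × ℝ → ℝ) (p : ℝ × ℝ × ℝ) : ℝ :=
  deriv (fun s : ℝ => u (p.1, p.2.1, s)) p.2.2

/-- Second partial derivative `u_xx`. -/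
noncomputable def pdXX (u : ℝ × ℝ × ℝ → ℝ) : ℝ × ℝ × ℝ → ℝ := pdX (pdX u)

/-- Second partial derivative `u_yy`. -/
noncomputable def pdYY (u : ℝ × ℝ × ℝ → ℝ) : ℝ × ℝ × ℝ → ℝ := pdY (pdY u)

/-- Mixed second partial derivative `u_xy = ∂_x ∂_y u`. -/
noncomputable def pdXY (u : ℝ × ℝ × ℝ → ℝ) : ℝ × ℝ × ℝ → ℝ := pdX (pdY u)

/-- invariance under (t,u) ↦ (t+s, u + a + b·x) (algebra ⟨∂_t, ∂_u, x∂_u⟩) for u_t = F(x,y,u_y)u_xx + … . -/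
theorem stmt_13 (F G H K : ℝ × ℝ × ℝ → ℝ) (u : ℝ × ℝ × ℝ → ℝ)
    (hu : ContDiff ℝ 2 u)
    (heq : ∀ p : ℝ × ℝ × ℝ,
      pdT u p = F (p.2.1, p.2.2, pdY u p) * pdXX u p
        + G (p.2.1, p.2.2, pdY u p) * pdYY u p
        + H (p.2.1, p.2.2, pdY u p) * pdXY u p
        + K (p.2.1, p.2.2, pdY u p))
    (s a b : ℝ) (v : ℝ × ℝ × ℝ → ℝ)
    (hv : ∀ q : ℝ × ℝ × ℝ, v q = u (q.1 + s, q.2.1, q.2.2) + a + b * q.2.1) :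
    ∀ p : ℝ × ℝ × ℝ,
      pdT v p = F (p.2.1, p.2.2, pdY v p) * pdXX v p
        + G (p.2.1, p.2.2, pdY v p) * pdYY v p
        + H (p.2.1, p.2.2, pdY v p) * pdXY v p
        + K (p.2.1, p.2.2, pdY v p) := by
  have hdiff : Differentiable ℝ u := hu.differentiable (by norm_num)
  set sh : ℝ × ℝ × ℝ → ℝ × ℝ × ℝ := fun q => (q.1 + s, q.2.1, q.2.2) with hsh
  -- pdT
  have hT : ∀ p, pdT v p = pdT u (sh p) := by
    intro p
    have h1 : (fun t : ℝ => v (t, p.2.1, p.2.2))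
        = fun t => u (t + s, p.2.1, p.2.2) + (a + b * p.2.1) := by
      funext t; rw [hv]; ring
    simp only [pdT, h1, deriv_add_const]
    exact deriv_comp_add_const (fun t => u (t, p.2.1, p.2.2)) s p.1
  -- pdY
  have hY : ∀ p, pdY v p = pdY u (sh p) := by
    intro p
    have h1 : (fun y : ℝ => v (p.1, p.2.1, y))
        = fun y => u (p.1 + s, p.2.1, y) + (a + b * p.2.1) := by
      funext y; rw [hv]; ring
    simp only [pdY, h1, deriv_add_const, hsh]
  -- pdX
  have hX : ∀ p, pdX v p = pdX u (sh p) + b := by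
    intro p
    have h1 : (fun x : ℝ => v (p.1, x, p.2.2))
        = fun x => u (p.1 + s, x, p.2.2) + (a + b * x) := by
      funext x; rw [hv]; ring
    have hd : DifferentiableAt ℝ (fun x : ℝ => u (p.1 + s, x, p.2.2)) p.2.1 := by
      exact (hdiff _).comp _ (by fun_prop)
    have hl : HasDerivAt (fun x : ℝ => a + b * x) b p.2.1 := by
      simpa using ((hasDerivAt_id p.2.1).const_mul b).const_add a
    simp only [pdX, h1, deriv_fun_add hd hl.differentiableAt, hl.deriv, hsh]
  -- second derivatives
  have hXX : ∀ p, pdXX v p = pdXX u (sh p) := by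
    intro p
    have h1 : (fun x : ℝ => pdX v (p.1, x, p.2.2))
        = fun x => pdX u (p.1 + s, x, p.2.2) + b := by
      funext x; exact hX (p.1, x, p.2.2)
    show deriv (fun x : ℝ => pdX v (p.1, x, p.2.2)) p.2.1 = pdXX u (sh p)
    rw [h1, deriv_add_const]
    rfl
  have hYY : ∀ p, pdYY v p = pdYY u (sh p) := by
    intro p
    have h1 : (fun y : ℝ => pdY v (p.1, p.2.1, y))
        = fun y => pdY u (p.1 + s, p.2.1, y) := by
      funext y; exact hY (p.1, p.2.1, y)
    show deriv (fun y : ℝ => pdY v (p.1, p.2.1, y)) p.2.2 = pdYY u (sh p)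
    rw [h1]
    rfl
  have hXY : ∀ p, pdXY v p = pdXY u (sh p) := by
    intro p
    have h1 : (fun x : ℝ => pdY v (p.1, x, p.2.2))
        = fun x => pdY u (p.1 + s, x, p.2.2) := by
      funext x; exact hY (p.1, x, p.2.2)
    show deriv (fun x : ℝ => pdY v (p.1, x, p.2.2)) p.2.1 = pdXY u (sh p)
    rw [h1]
    rfl
  intro p
  rw [hT, hY, hXX, hYY, hXY]
  exact heq (sh p)
end
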